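/- Let (A,B) and (A′,B′) be as in the type-one single column simulation with 4 ≤ K ≤ 8, let 0 ≤ ε < 1/(11n), and let (x*,y*) be an ε-WSNE of (A′,B′). Then P(rb_e) ≥ 1/(48n), i.e., the total probability x* places on the encoding row block is at least 1/(48n). -/

import Mathlib

open Finset
open scoped Classical

/-- `(x, y)` is an `ε`-well-supported Nash equilibrium of the bimatrix game with
`nr` rows, `nc` columns and payoff matrices `A` (row player) and `B` (column player). -/
def IsWSNE (nr nc : ℕ) (A B : ℕ → ℕ → ℝ) (x y : ℕ → ℝ) (ε : ℝ) : Prop :=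
  (∀ i, 0 ≤ x i) ∧ (∀ i, nr ≤ i → x i = 0) ∧ (∑ i ∈ range nr, x i = 1) ∧
  (∀ j, 0 ≤ y j) ∧ (∀ j, nc ≤ j → y j = 0) ∧ (∑ j ∈ range nc, y j = 1) ∧
  (∀ i < nr, 0 < x i → ∀ i' < nr,
    ∑ j ∈ range nc, A i j * y j ≥ ∑ j ∈ range nc, A i' j * y j - ε) ∧
  (∀ j < nc, 0 < y j → ∀ j' < nc,
    ∑ i ∈ range nr, x i * B i j ≥ ∑ i ∈ range nr, x i * B i j' - ε)

/-- Input assumptions of the type-one single column simulation: `(A,B)` has at most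
`n` rows and columns (`nr` rows, `nc` columns), all entries in `[0,K]`, every row
and column of `A` and `B` has an entry `≥ 1`, the columns of `A` containing `K` are
exactly the columns `j < k`, each such column contains exactly one `K`, its other
non-zero entries lie in `{1,2}` and are either at most two values from `{1,2}` or
at most three `1`s. -/
def Scs1Input (n nr nc k : ℕ) (K : ℝ) (A B : ℕ → ℕ → ℝ) : Prop :=
  nr ≤ n ∧ nc ≤ n ∧ k ≤ nc ∧
  (∀ i < nr, ∀ j < nc, 0 ≤ A i j ∧ A i j ≤ K) ∧
  (∀ i < nr, ∀ j < nc, 0 ≤ B i j ∧ B i j ≤ K) ∧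
  (∀ i < nr, ∃ j < nc, 1 ≤ A i j) ∧ (∀ j < nc, ∃ i < nr, 1 ≤ A i j) ∧
  (∀ i < nr, ∃ j < nc, 1 ≤ B i j) ∧ (∀ j < nc, ∃ i < nr, 1 ≤ B i j) ∧
  (∀ j < k,
    ((range nr).filter fun i => A i j = K).card = 1 ∧
    (∀ i < nr, A i j = 0 ∨ A i j = 1 ∨ A i j = 2 ∨ A i j = K) ∧
    (((range nr).filter fun i => A i j = 1 ∨ A i j = 2).card ≤ 2 ∨
      (((range nr).filter fun i => A i j = 1).card ≤ 3 ∧ ∀ i < nr, A i j ≠ 2))) ∧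
  (∀ j, k ≤ j → j < nc → ∀ i < nr, A i j ≠ K)

/-- The row player's payoff matrix `A'` of the type-one single column simulation.
It has `2k + nr` rows and `2k + nc` columns.  For each `j < k`: the block
`(rbʲ, cb₁ʲ) = ({2j,2j+1}, {3j,3j+1})` equals `S = [[2,0],[0,1]]`, the block
`(rbʲ, cb₂ʲ) = ({2j,2j+1}, {3j+2})` is all ones, and the block `(rb_e, cb₁ʲ)`
equals `encode(A_j)` (each `1` of column `A_j` kept as a `1` in the first column,
each `2` replaced by a `1` in the second column, the `K` replaced by `K/2` in the
second column).  Columns `c ≥ 3k` restricted to `rb_e` equal the columns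
`A_{k}, …, A_{nc-1}`; all other entries are `0`. -/
noncomputable def scs1A (k : ℕ) (K : ℝ) (A : ℕ → ℕ → ℝ) : ℕ → ℕ → ℝ := fun r c =>
  if r < 2*k then
    if c = 3*(r/2) then (if r % 2 = 0 then 2 else 0)
    else if c = 3*(r/2) + 1 then (if r % 2 = 0 then 0 else 1)
    else if c = 3*(r/2) + 2 then 1
    else 0
  else
    if c < 3*k then
      (if c % 3 = 0 then (if A (r - 2*k) (c/3) = 1 then 1 else 0)
       else if c % 3 = 1 then
         (if A (r - 2*k) (c/3) = K then K/2
          else if A (r - 2*k) (c/3) = 2 then 1 else 0)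
       else 0)
    else A (r - 2*k) (c - 2*k)

/-- The column player's payoff matrix `B'` of the type-one single column
simulation: for `j < k` the block `(rbʲ, cb₁ʲ)` equals `T = [[0,1],[1,0]]` and the
block `(rb_e, cb₂ʲ)` equals column `B_j`; columns `c ≥ 3k` restricted to `rb_e`
equal the columns `B_k, …, B_{nc-1}`; all other entries are `0`. -/
noncomputable def scs1B (k : ℕ) (B : ℕ → ℕ → ℝ) : ℕ → ℕ → ℝ := fun r c =>
  if r < 2*k then
    if c = 3*(r/2) then (if r % 2 = 0 then 0 else 1)
    else if c = 3*(r/2) + 1 then (if r % 2 = 0 then 1 else 0)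
    else 0
  else
    if c < 3*k then (if c % 3 = 2 then B (r - 2*k) (c/3) else 0)
    else B (r - 2*k) (c - 2*k)

/-- The (un-normalized) translated column strategy `y'`: for `j < k`,
`y'_j = y*_{3j}` if `P(cb₁ʲ) ≥ 11ε` and `0` otherwise; for `j ≥ k`,
`y'_j = y*_{3k + (j-k)}`. -/
noncomputable def scs1Y (k : ℕ) (ε : ℝ) (ystar : ℕ → ℝ) : ℕ → ℝ := fun j =>
  if j < k then (if 11 * ε ≤ ystar (3*j) + ystar (3*j+1) then ystar (3*j) else 0)
  else ystar (2*k + j)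

lemma sum_two_blocks (k : ℕ) (f : ℕ → ℝ) :
    ∑ i ∈ range (2*k), f i = ∑ j ∈ range k, (f (2*j) + f (2*j+1)) := by
  induction k with
  | zero => simp
  | succ k ih =>
    rw [show 2*(k+1) = 2*k+1+1 by ring, sum_range_succ, sum_range_succ, ih, sum_range_succ]
    ring

lemma sum_three_blocks (k : ℕ) (f : ℕ → ℝ) :
    ∑ i ∈ range (3*k), f i = ∑ j ∈ range k, (f (3*j) + f (3*j+1) + f (3*j+2)) := by
  induction k with
  | zero => simp
  | succ k ih =>
    rw [show 3*(k+1) = 3*k+1+1+1 by ring, sum_range_succ, sum_range_succ, sum_range_succ, ih,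
      sum_range_succ]
    ring

lemma scs1A_even (k : ℕ) (K : ℝ) (A : ℕ → ℕ → ℝ) (j c : ℕ) (hj : j < k) :
    scs1A k K A (2*j) c = if c = 3*j then 2 else if c = 3*j+1 then 0
      else if c = 3*j+2 then 1 else 0 := by
  have h1 : 2*j < 2*k := by omega
  have h2 : 2*j/2 = j := by omega
  have h3 : 2*j % 2 = 0 := by omega
  simp only [scs1A, if_pos h1, h2, h3]
  norm_num

lemma scs1A_odd (k : ℕ) (K : ℝ) (A : ℕ → ℕ → ℝ) (j c : ℕ) (hj : j < k) :
    scs1A k K A (2*j+1) c = if c = 3*j then 0 else if c = 3*j+1 then 1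
      else if c = 3*j+2 then 1 else 0 := by
  have h1 : 2*j+1 < 2*k := by omega
  have h2 : (2*j+1)/2 = j := by omega
  have h3 : (2*j+1) % 2 = 1 := by omega
  simp only [scs1A, if_pos h1, h2, h3]
  norm_num

lemma scs1B_even (k : ℕ) (B : ℕ → ℕ → ℝ) (j c : ℕ) (hj : j < k) :
    scs1B k B (2*j) c = if c = 3*j then 0 else if c = 3*j+1 then 1 else 0 := by
  have h1 : 2*j < 2*k := by omega
  have h2 : 2*j/2 = j := by omega
  have h3 : 2*j % 2 = 0 := by omega
  simp only [scs1B, if_pos h1, h2, h3]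
  norm_num

lemma scs1B_odd (k : ℕ) (B : ℕ → ℕ → ℝ) (j c : ℕ) (hj : j < k) :
    scs1B k B (2*j+1) c = if c = 3*j then 1 else if c = 3*j+1 then 0 else 0 := by
  have h1 : 2*j+1 < 2*k := by omega
  have h2 : (2*j+1)/2 = j := by omega
  have h3 : (2*j+1) % 2 = 1 := by omega
  simp only [scs1B, if_pos h1, h2, h3]
  norm_num

lemma scs1A_enc (k : ℕ) (K : ℝ) (A : ℕ → ℕ → ℝ) (i c : ℕ) :
    scs1A k K A (2*k+i) c =
      if c < 3*k then
        (if c % 3 = 0 then (if A i (c/3) = 1 then 1 else 0)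
         else if c % 3 = 1 then
           (if A i (c/3) = K then K/2 else if A i (c/3) = 2 then 1 else 0)
         else 0)
      else A i (c - 2*k) := by
  have h1 : ¬ (2*k+i < 2*k) := by omega
  have h2 : 2*k+i - 2*k = i := by omega
  simp only [scs1A, if_neg h1, h2]

lemma scs1B_enc (k : ℕ) (B : ℕ → ℕ → ℝ) (i c : ℕ) :
    scs1B k B (2*k+i) c =
      if c < 3*k then (if c % 3 = 2 then B i (c/3) else 0) else B i (c - 2*k) := by
  have h1 : ¬ (2*k+i < 2*k) := by omega
  have h2 : 2*k+i - 2*k = i := by omega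
  simp only [scs1B, if_neg h1, h2]

lemma scs1A_nonneg (k nr nc : ℕ) (K : ℝ) (A : ℕ → ℕ → ℝ) (hK : 0 ≤ K)
    (hA : ∀ i < nr, ∀ j < nc, 0 ≤ A i j ∧ A i j ≤ K) (r c : ℕ)
    (hr : r < 2*k+nr) (hc : c < 2*k+nc) (hk : k ≤ nc) : 0 ≤ scs1A k K A r c := by
  unfold scs1A
  split_ifs
  all_goals try norm_num
  all_goals first
    | linarith
    | exact (hA (r-2*k) (by omega) (c-2*k) (by omega)).1

lemma colpay_3j (k nr : ℕ) (B : ℕ → ℕ → ℝ) (x : ℕ → ℝ) (j : ℕ) (hj : j < k) :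
    ∑ i ∈ range (2*k+nr), x i * scs1B k B i (3*j) = x (2*j+1) := by
  rw [Finset.sum_range_add, sum_two_blocks]
  have hz : ∑ i ∈ range nr, x (2*k+i) * scs1B k B (2*k+i) (3*j) = 0 := by
    apply Finset.sum_eq_zero; intro i _
    rw [scs1B_enc]
    have h1 : 3*j < 3*k := by omega
    have h2 : ¬ (3*j % 3 = 2) := by omega
    simp [h1, h2]
  have hone : ∀ b ∈ range k, b ≠ j →
      (x (2*b) * scs1B k B (2*b) (3*j) + x (2*b+1) * scs1B k B (2*b+1) (3*j)) = 0 := by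
    intro b hb hbj
    have hbk := Finset.mem_range.mp hb
    rw [scs1B_even k B b _ hbk, scs1B_odd k B b _ hbk]
    have h1 : ¬(3*j = 3*b) := by omega
    have h2 : ¬(3*j = 3*b+1) := by omega
    simp [h1, h2]
  rw [hz, add_zero, Finset.sum_eq_single_of_mem j (Finset.mem_range.mpr hj) hone,
    scs1B_even k B j _ hj, scs1B_odd k B j _ hj]
  simp

lemma colpay_3j1 (k nr : ℕ) (B : ℕ → ℕ → ℝ) (x : ℕ → ℝ) (j : ℕ) (hj : j < k) :
    ∑ i ∈ range (2*k+nr), x i * scs1B k B i (3*j+1) = x (2*j) := by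
  rw [Finset.sum_range_add, sum_two_blocks]
  have hz : ∑ i ∈ range nr, x (2*k+i) * scs1B k B (2*k+i) (3*j+1) = 0 := by
    apply Finset.sum_eq_zero; intro i _
    rw [scs1B_enc]
    have h1 : 3*j+1 < 3*k := by omega
    have h2 : ¬ ((3*j+1) % 3 = 2) := by omega
    simp [h1, h2]
  have hone : ∀ b ∈ range k, b ≠ j →
      (x (2*b) * scs1B k B (2*b) (3*j+1) + x (2*b+1) * scs1B k B (2*b+1) (3*j+1)) = 0 := by
    intro b hb hbj
    have hbk := Finset.mem_range.mp hb
    rw [scs1B_even k B b _ hbk, scs1B_odd k B b _ hbk]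
    have h1 : ¬(3*j+1 = 3*b) := by omega
    have h2 : ¬(3*j+1 = 3*b+1) := by omega
    simp [h1, h2, Ne.symm hbj]
  rw [hz, add_zero, Finset.sum_eq_single_of_mem j (Finset.mem_range.mpr hj) hone,
    scs1B_even k B j _ hj, scs1B_odd k B j _ hj]
  have h1 : ¬(3*j+1 = 3*j) := by omega
  simp [h1]

lemma colpay_small (k nr nc : ℕ) (K : ℝ) (B : ℕ → ℕ → ℝ) (x : ℕ → ℝ) (c : ℕ)
    (hc : c < 2*k+nc) (hcase : c % 3 = 2 ∨ 3*k ≤ c) (hk : k ≤ nc)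
    (hB : ∀ i < nr, ∀ j < nc, 0 ≤ B i j ∧ B i j ≤ K) (hx : ∀ i, 0 ≤ x i) :
    ∑ i ∈ range (2*k+nr), x i * scs1B k B i c ≤ K * ∑ i ∈ range nr, x (2*k+i) := by
  rw [Finset.sum_range_add, sum_two_blocks]
  have hz : ∑ b ∈ range k, (x (2*b) * scs1B k B (2*b) c + x (2*b+1) * scs1B k B (2*b+1) c)
      = 0 := by
    apply Finset.sum_eq_zero; intro b hb
    have hbk := Finset.mem_range.mp hb
    rw [scs1B_even k B b c hbk, scs1B_odd k B b c hbk]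
    have h1 : ¬(c = 3*b) := by rcases hcase with h|h <;> omega
    have h2 : ¬(c = 3*b+1) := by rcases hcase with h|h <;> omega
    simp [h1, h2]
  rw [hz, zero_add]
  calc ∑ i ∈ range nr, x (2*k+i) * scs1B k B (2*k+i) c
      ≤ ∑ i ∈ range nr, x (2*k+i) * K := by
        apply Finset.sum_le_sum; intro i hi
        apply mul_le_mul_of_nonneg_left _ (hx _)
        rw [scs1B_enc]
        by_cases h3 : c < 3*k
        · have hm : c % 3 = 2 := by rcases hcase with h|h; exact h; omega
          rw [if_pos h3, if_pos hm]
          exact (hB i (Finset.mem_range.mp hi) (c/3) (by omega)).2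
        · rw [if_neg h3]
          exact (hB i (Finset.mem_range.mp hi) (c-2*k) (by omega)).2
    _ = K * ∑ i ∈ range nr, x (2*k+i) := by rw [← Finset.sum_mul]; ring

lemma rowpay_even (k nc : ℕ) (K : ℝ) (A : ℕ → ℕ → ℝ) (y : ℕ → ℝ) (j : ℕ)
    (hj : j < k) (hk : k ≤ nc) :
    ∑ c ∈ range (2*k+nc), scs1A k K A (2*j) c * y c = 2 * y (3*j) + y (3*j+2) := by
  rw [show 2*k+nc = 3*k + (nc - k) by omega, Finset.sum_range_add, sum_three_blocks]
  have hz : ∑ c ∈ range (nc-k), scs1A k K A (2*j) (3*k+c) * y (3*k+c) = 0 := by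
    apply Finset.sum_eq_zero; intro c _
    rw [scs1A_even k K A j _ hj]
    have h1 : ¬(3*k+c = 3*j) := by omega
    have h2 : ¬(3*k+c = 3*j+1) := by omega
    have h3 : ¬(3*k+c = 3*j+2) := by omega
    simp [h1, h2, h3]
  have hone : ∀ b ∈ range k, b ≠ j →
      (scs1A k K A (2*j) (3*b) * y (3*b) + scs1A k K A (2*j) (3*b+1) * y (3*b+1)
        + scs1A k K A (2*j) (3*b+2) * y (3*b+2)) = 0 := by
    intro b hb hbj
    rw [scs1A_even k K A j (3*b) hj, scs1A_even k K A j (3*b+1) hj,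
      scs1A_even k K A j (3*b+2) hj]
    have h1 : ¬(3*b = 3*j) := by omega
    have h2 : ¬(3*b = 3*j+1) := by omega
    have h3 : ¬(3*b = 3*j+2) := by omega
    have h4 : ¬(3*b+1 = 3*j) := by omega
    have h5 : ¬(3*b+1 = 3*j+1) := by omega
    have h6 : ¬(3*b+1 = 3*j+2) := by omega
    have h7 : ¬(3*b+2 = 3*j) := by omega
    have h8 : ¬(3*b+2 = 3*j+1) := by omega
    have h9 : ¬(3*b+2 = 3*j+2) := by omega
    simp [h1, h2, h3, h4, h5, h6, h7, h8, h9]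
  rw [hz, add_zero, Finset.sum_eq_single_of_mem j (Finset.mem_range.mpr hj) hone,
    scs1A_even k K A j (3*j) hj, scs1A_even k K A j (3*j+1) hj,
    scs1A_even k K A j (3*j+2) hj]
  have h1 : ¬(3*j+1 = 3*j) := by omega
  have h2 : ¬(3*j+2 = 3*j) := by omega
  have h3 : ¬(3*j+2 = 3*j+1) := by omega
  simp [h1, h2, h3]

lemma rowpay_odd (k nc : ℕ) (K : ℝ) (A : ℕ → ℕ → ℝ) (y : ℕ → ℝ) (j : ℕ)
    (hj : j < k) (hk : k ≤ nc) :
    ∑ c ∈ range (2*k+nc), scs1A k K A (2*j+1) c * y c = y (3*j+1) + y (3*j+2) := by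
  rw [show 2*k+nc = 3*k + (nc - k) by omega, Finset.sum_range_add, sum_three_blocks]
  have hz : ∑ c ∈ range (nc-k), scs1A k K A (2*j+1) (3*k+c) * y (3*k+c) = 0 := by
    apply Finset.sum_eq_zero; intro c _
    rw [scs1A_odd k K A j _ hj]
    have h1 : ¬(3*k+c = 3*j) := by omega
    have h2 : ¬(3*k+c = 3*j+1) := by omega
    have h3 : ¬(3*k+c = 3*j+2) := by omega
    simp [h1, h2, h3]
  have hone : ∀ b ∈ range k, b ≠ j →
      (scs1A k K A (2*j+1) (3*b) * y (3*b) + scs1A k K A (2*j+1) (3*b+1) * y (3*b+1)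
        + scs1A k K A (2*j+1) (3*b+2) * y (3*b+2)) = 0 := by
    intro b hb hbj
    rw [scs1A_odd k K A j (3*b) hj, scs1A_odd k K A j (3*b+1) hj,
      scs1A_odd k K A j (3*b+2) hj]
    have h1 : ¬(3*b = 3*j) := by omega
    have h2 : ¬(3*b = 3*j+1) := by omega
    have h3 : ¬(3*b = 3*j+2) := by omega
    have h4 : ¬(3*b+1 = 3*j) := by omega
    have h5 : ¬(3*b+1 = 3*j+1) := by omega
    have h6 : ¬(3*b+1 = 3*j+2) := by omega
    have h7 : ¬(3*b+2 = 3*j) := by omega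
    have h8 : ¬(3*b+2 = 3*j+1) := by omega
    have h9 : ¬(3*b+2 = 3*j+2) := by omega
    simp [h1, h2, h3, h4, h5, h6, h7, h8, h9]
  rw [hz, add_zero, Finset.sum_eq_single_of_mem j (Finset.mem_range.mpr hj) hone,
    scs1A_odd k K A j (3*j) hj, scs1A_odd k K A j (3*j+1) hj,
    scs1A_odd k K A j (3*j+2) hj]
  have h1 : ¬(3*j+1 = 3*j) := by omega
  have h2 : ¬(3*j+2 = 3*j) := by omega
  have h3 : ¬(3*j+2 = 3*j+1) := by omega
  simp [h1, h2, h3]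

/-- If `4 ≤ K ≤ 8`, `0 ≤ ε < 1/(11n)` and `(x*, y*)` is an `ε`-WSNE of `(A', B')`,
then the total probability placed by `x*` on the encoding row block `rb_e` is at
least `1/(48n)`. -/
theorem stmt11 (n nr nc k : ℕ) (K ε : ℝ) (A B : ℕ → ℕ → ℝ) (xstar ystar : ℕ → ℝ)
    (hK4 : 4 ≤ K) (hK8 : K ≤ 8)
    (hin : Scs1Input n nr nc k K A B)
    (hε0 : 0 ≤ ε) (hε : ε < 1 / (11 * (n:ℝ)))
    (hwsne : IsWSNE (2*k+nr) (2*k+nc) (scs1A k K A) (scs1B k B) xstar ystar ε) :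
    1 / (48 * (n:ℝ)) ≤ ∑ i ∈ range nr, xstar (2*k+i) := by
  unfold Scs1Input at hin
  unfold IsWSNE at hwsne
  obtain ⟨hnrn, hncn, hknc, hA, hB, hArow, -, -, -, hKcol, -⟩ := hin
  obtain ⟨hx0, hxtop, hx1, hy0, hytop, hy1, hrow, hcol⟩ := hwsne
  have hnc1 : 1 ≤ nc := by
    by_contra hcn
    have hnc0 : nc = 0 := by omega
    have hk0 : k = 0 := by omega
    have hnr0 : nr = 0 := by
      by_contra h2
      obtain ⟨j, hj, -⟩ := hArow 0 (by omega)
      omega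
    rw [hk0, hnr0] at hx1
    simp at hx1
  have hν : (1:ℝ) ≤ (n:ℝ) := by exact_mod_cast le_trans hnc1 hncn
  have hν0 : (0:ℝ) < 48 * (n:ℝ) := by linarith
  by_cases hk0 : k = 0
  · subst hk0
    have h : ∑ i ∈ range nr, xstar (2*0+i) = 1 := by simpa using hx1
    rw [h, div_le_one hν0]; linarith
  have hk1 : 1 ≤ k := Nat.one_le_iff_ne_zero.mpr hk0
  have hkr1 : (1:ℝ) ≤ (k:ℝ) := by exact_mod_cast hk1
  have hkν : (k:ℝ) ≤ (n:ℝ) := by exact_mod_cast le_trans hknc hncn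
  by_contra hcon
  push_neg at hcon
  rw [lt_div_iff₀ hν0] at hcon
  have hd0 : (0:ℝ) ≤ ∑ i ∈ range nr, xstar (2*k+i) :=
    Finset.sum_nonneg fun i _ => hx0 _
  have hε11 : ε * (11*(n:ℝ)) < 1 := by
    rw [lt_div_iff₀ (by linarith : (0:ℝ) < 11*(n:ℝ))] at hε; exact hε
  have hgad : ∑ j ∈ range k, (xstar (2*j) + xstar (2*j+1))
      = 1 - ∑ i ∈ range nr, xstar (2*k+i) := by
    rw [Finset.sum_range_add, sum_two_blocks] at hx1
    linarith
  obtain ⟨j0, hj0m, hj0big⟩ : ∃ j0 ∈ range k,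
      (1 - ∑ i ∈ range nr, xstar (2*k+i))/(k:ℝ) ≤ xstar (2*j0) + xstar (2*j0+1) := by
    apply Finset.exists_le_of_sum_le ⟨0, Finset.mem_range.mpr hk1⟩
    have hkk : (k:ℝ) * ((1 - ∑ i ∈ range nr, xstar (2*k+i))/(k:ℝ))
        = 1 - ∑ i ∈ range nr, xstar (2*k+i) := by field_simp
    rw [Finset.sum_const, card_range, nsmul_eq_mul, hkk, hgad]
  have hj0k := Finset.mem_range.mp hj0m
  have hj0big' : 1 - ∑ i ∈ range nr, xstar (2*k+i)
      ≤ (k:ℝ) * (xstar (2*j0) + xstar (2*j0+1)) := by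
    rw [div_le_iff₀ (by linarith : (0:ℝ) < (k:ℝ))] at hj0big
    linarith
  obtain ⟨c0, hc0, hc0big⟩ : ∃ c0 < 2*k+nc, 1 - ∑ i ∈ range nr, xstar (2*k+i)
      ≤ 2*(n:ℝ) * (∑ i ∈ range (2*k+nr), xstar i * scs1B k B i c0) := by
    rcases le_total (xstar (2*j0)) (xstar (2*j0+1)) with h | h
    · refine ⟨3*j0, by omega, ?_⟩
      rw [colpay_3j k nr B xstar j0 hj0k]
      have p1 : (k:ℝ)*(xstar (2*j0) + xstar (2*j0+1)) ≤ (k:ℝ)*(2*xstar (2*j0+1)) :=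
        mul_le_mul_of_nonneg_left (by linarith) (by linarith)
      have p2 : (k:ℝ)*(2*xstar (2*j0+1)) ≤ 2*(n:ℝ)*xstar (2*j0+1) := by
        have := mul_nonneg (by linarith : (0:ℝ) ≤ (n:ℝ)-(k:ℝ)) (hx0 (2*j0+1))
        nlinarith
      linarith
    · refine ⟨3*j0+1, by omega, ?_⟩
      rw [colpay_3j1 k nr B xstar j0 hj0k]
      have p1 : (k:ℝ)*(xstar (2*j0) + xstar (2*j0+1)) ≤ (k:ℝ)*(2*xstar (2*j0)) :=
        mul_le_mul_of_nonneg_left (by linarith) (by linarith)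
      have p2 : (k:ℝ)*(2*xstar (2*j0)) ≤ 2*(n:ℝ)*xstar (2*j0) := by
        have := mul_nonneg (by linarith : (0:ℝ) ≤ (n:ℝ)-(k:ℝ)) (hx0 (2*j0))
        nlinarith
      linarith
  have hplayed : ∀ c < 2*k+nc, 0 < ystar c →
      1 - (∑ i ∈ range nr, xstar (2*k+i)) - 2*(n:ℝ)*ε
        ≤ 2*(n:ℝ) * (∑ i ∈ range (2*k+nr), xstar i * scs1B k B i c) := by
    intro c hc hyc
    have h := hcol c hc hyc c0 hc0
    have h2 : 2*(n:ℝ) * ((∑ i ∈ range (2*k+nr), xstar i * scs1B k B i c0) - ε)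
        ≤ 2*(n:ℝ) * (∑ i ∈ range (2*k+nr), xstar i * scs1B k B i c) :=
      mul_le_mul_of_nonneg_left (by linarith) (by linarith)
    linarith [hc0big]
  have hzero : ∀ c, c < 2*k+nc → (c % 3 = 2 ∨ 3*k ≤ c) → ystar c = 0 := by
    intro c hc hcase
    by_contra hne
    have hyc : 0 < ystar c := lt_of_le_of_ne (hy0 c) (Ne.symm hne)
    have h1 := hplayed c hc hyc
    have h2 := colpay_small k nr nc K B xstar c hc hcase hknc hB hx0
    have h3 : 2*(n:ℝ) * (∑ i ∈ range (2*k+nr), xstar i * scs1B k B i c)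
        ≤ 2*(n:ℝ)*(K * ∑ i ∈ range nr, xstar (2*k+i)) :=
      mul_le_mul_of_nonneg_left h2 (by linarith)
    linarith [hcon, hε11, hd0, hν,
      mul_nonneg (mul_nonneg (by linarith : (0:ℝ) ≤ (n:ℝ))
        hd0) (by linarith : (0:ℝ) ≤ 8 - K),
      mul_nonneg (by linarith : (0:ℝ) ≤ (n:ℝ)-1) hd0]
  have hysum : ∑ j ∈ range k, (ystar (3*j) + ystar (3*j+1)) = 1 := by
    rw [show 2*k+nc = 3*k + (nc-k) by omega, Finset.sum_range_add, sum_three_blocks] at hy1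
    have h2 : ∑ c ∈ range (nc-k), ystar (3*k+c) = 0 :=
      Finset.sum_eq_zero fun c hc =>
        hzero _ (by have := Finset.mem_range.mp hc; omega) (Or.inr (by omega))
    have h3 : ∑ j ∈ range k, (ystar (3*j) + ystar (3*j+1) + ystar (3*j+2))
        = ∑ j ∈ range k, (ystar (3*j) + ystar (3*j+1)) := by
      apply Finset.sum_congr rfl; intro j hj
      have hz := hzero (3*j+2) (by have := Finset.mem_range.mp hj; omega)
        (Or.inl (by omega))
      rw [hz, add_zero]
    rw [h2, add_zero, h3] at hy1; exact hy1
  have hblock : ∀ j ∈ range k, ystar (3*j) + ystar (3*j+1) ≤ 2*ε := by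
    intro j hjm
    have hj := Finset.mem_range.mp hjm
    obtain ⟨hcard, -, -⟩ := hKcol j hj
    rw [Finset.card_eq_one] at hcard
    obtain ⟨i, hi⟩ := hcard
    have him : i ∈ (range nr).filter fun i => A i j = K := hi ▸ Finset.mem_singleton_self i
    rw [Finset.mem_filter, Finset.mem_range] at him
    obtain ⟨hinr, hiK⟩ := him
    have ha0 : 0 ≤ ystar (3*j) := hy0 _
    have hb0 : 0 ≤ ystar (3*j+1) := hy0 _
    have hy32 : ystar (3*j+2) = 0 := hzero _ (by omega) (Or.inl (by omega))
    have hRe : K/2 * ystar (3*j+1)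
        ≤ ∑ c ∈ range (2*k+nc), scs1A k K A (2*k+i) c * ystar c := by
      have hnn : ∀ c ∈ range (2*k+nc), 0 ≤ scs1A k K A (2*k+i) c * ystar c := by
        intro c hc
        exact mul_nonneg
          (scs1A_nonneg k nr nc K A (by linarith) hA (2*k+i) c (by omega)
            (Finset.mem_range.mp hc) hknc) (hy0 c)
      have hs := Finset.single_le_sum hnn (Finset.mem_range.mpr (show 3*j+1 < 2*k+nc by omega))
      have he : scs1A k K A (2*k+i) (3*j+1) = K/2 := by
        rw [scs1A_enc]
        have g1 : 3*j+1 < 3*k := by omega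
        have g0 : ¬((3*j+1) % 3 = 0) := by omega
        have g2 : (3*j+1) % 3 = 1 := by omega
        have g3 : (3*j+1)/3 = j := by omega
        rw [if_pos g1, if_neg g0, if_pos g2, g3, if_pos hiK]
      rwa [he] at hs
    have hRa : ∑ c ∈ range (2*k+nc), scs1A k K A (2*j) c * ystar c = 2 * ystar (3*j) := by
      rw [rowpay_even k nc K A ystar j hj hknc, hy32, add_zero]
    have hRb : ∑ c ∈ range (2*k+nc), scs1A k K A (2*j+1) c * ystar c = ystar (3*j+1) := by
      rw [rowpay_odd k nc K A ystar j hj hknc, hy32, add_zero]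
    have hxa : 0 < ystar (3*j) → 0 < xstar (2*j+1) := by
      intro h
      have h1 := hplayed (3*j) (by omega) h
      rw [colpay_3j k nr B xstar j hj] at h1
      by_contra hle
      push_neg at hle
      have hnp : 2*(n:ℝ) * xstar (2*j+1) ≤ 0 :=
        mul_nonpos_of_nonneg_of_nonpos (by linarith) hle
      linarith [hcon, hε11, hd0,
        mul_nonneg (by linarith : (0:ℝ) ≤ (n:ℝ)-1) hd0]
    have hxb : 0 < ystar (3*j+1) → 0 < xstar (2*j) := by
      intro h
      have h1 := hplayed (3*j+1) (by omega) h
      rw [colpay_3j1 k nr B xstar j hj] at h1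
      by_contra hle
      push_neg at hle
      have hnp : 2*(n:ℝ) * xstar (2*j) ≤ 0 :=
        mul_nonpos_of_nonneg_of_nonpos (by linarith) hle
      linarith [hcon, hε11, hd0,
        mul_nonneg (by linarith : (0:ℝ) ≤ (n:ℝ)-1) hd0]
    rcases eq_or_lt_of_le hb0 with hb | hb
    · rcases eq_or_lt_of_le ha0 with ha | ha
      · linarith
      · have hx := hxa ha
        have h := hrow (2*j+1) (by omega) hx (2*j) (by omega)
        rw [hRa, hRb] at h
        linarith
    · have hx := hxb hb
      have h := hrow (2*j) (by omega) hx (2*k+i) (by omega)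
      rw [hRa] at h
      rcases eq_or_lt_of_le ha0 with ha | ha
      · linarith [hRe, mul_nonneg (by linarith : (0:ℝ) ≤ K-4) hb0, hε0]
      · have hx' := hxa ha
        have h1 := hrow (2*j+1) (by omega) hx' (2*k+i) (by omega)
        rw [hRb] at h1
        have h2 := hrow (2*j+1) (by omega) hx' (2*j) (by omega)
        rw [hRa, hRb] at h2
        linarith [hRe, mul_nonneg (by linarith : (0:ℝ) ≤ K-4) hb0]
  have hfin : (1:ℝ) ≤ (k:ℝ) * (2*ε) := by
    rw [← hysum]
    calc ∑ j ∈ range k, (ystar (3*j) + ystar (3*j+1))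
        ≤ ∑ _j ∈ range k, 2*ε := Finset.sum_le_sum hblock
      _ = (k:ℝ)*(2*ε) := by rw [Finset.sum_const, card_range, nsmul_eq_mul]
  linarith [hε11, hfin, mul_nonneg (by linarith : (0:ℝ) ≤ (n:ℝ)-(k:ℝ)) hε0]
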